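/- Under assumption (H3), suppose ε_n = o(1/(N^t_n log N^s_n)), let (U_n, M_n) be solutions of the entropy-regularized finite MFG systems on the grids (S_n, T_n), and assume M_n → m in C([0,T]; P_1(R^d)). Then for every x ∈ R^d and all sequences x^n ∈ S_n, t^n ∈ T_n with x^n → x and t^n → T, one has U_n(x^n, t^n) → g(x, m(T)); equivalently, the upper and lower relaxed limits satisfy U*(x,T) = U_*(x,T) = g(x, m(T)) for all x ∈ R^d. -/

import Mathlib

open MeasureTheory Filter Topology Set
open scoped ENNReal

noncomputable section

/-! ### Continuous objects -/

/-- The path space `Γ = C([0,T]; ℝ^d)` with the uniform distance. -/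
abbrev PathSpace (T : ℝ) (d : ℕ) := C(Set.Icc (0 : ℝ) T, Fin d → ℝ)

/-- Evaluation of a path at time `t ∈ [0,T]` (times are clamped to `[0,T]`). -/
def ev {T : ℝ} {d : ℕ} (hT : 0 ≤ T) (γ : PathSpace T d) (t : ℝ) : Fin d → ℝ :=
  γ (Set.projIcc 0 T hT t)

/-- The Kantorovich–Rubinstein (Wasserstein-1) distance, via couplings. -/
def W1 {X : Type*} [MeasurableSpace X] [PseudoMetricSpace X] (μ ν : Measure X) : ℝ :=
  sInf {r : ℝ | ∃ γ : Measure (X × X), γ.map Prod.fst = μ ∧ γ.map Prod.snd = ν ∧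
    r = ∫ p, dist p.1 p.2 ∂γ}

/-- `m ∈ P₁(ℝ^d)`: a Borel probability measure with finite first moment. -/
def IsP1 {d : ℕ} (m : Measure (Fin d → ℝ)) : Prop :=
  IsProbabilityMeasure m ∧ (∫⁻ x, ‖x‖₊ ∂m) < ⊤

/-! ### The space/time grids and the associated finite MFG -/

/-- Space step `Δx_n = 1/N^s_n`. -/
def dxn (Ns : ℕ → ℕ) (n : ℕ) : ℝ := 1 / (Ns n : ℝ)

/-- Time step `Δt_n = T/N^t_n`. -/
def dtn (T : ℝ) (Nt : ℕ → ℕ) (n : ℕ) : ℝ := T / (Nt n : ℝ)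

/-- Indices of grid points: `i ∈ ℤ^d` with `|i|_∞ ≤ (N^s_n)²`. -/
def gridIdx (d : ℕ) (Ns : ℕ → ℕ) (n : ℕ) : Finset (Fin d → ℤ) :=
  Finset.Icc (fun _ => -(Ns n : ℤ) ^ 2) fun _ => (Ns n : ℤ) ^ 2

/-- The grid point `x_i = i Δx_n ∈ ℝ^d`. -/
def gpt (d : ℕ) (Ns : ℕ → ℕ) (n : ℕ) (i : Fin d → ℤ) : Fin d → ℝ :=
  fun j => (i j : ℝ) * dxn Ns n

/-- The simplex of probability vectors indexed by a finite set `A`. -/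
def gsimplex {ι : Type*} (A : Finset ι) : Set (ι → ℝ) :=
  {p | (∀ i, 0 ≤ p i) ∧ (∀ i ∉ A, p i = 0) ∧ ∑ i ∈ A, p i = 1}

/-- The (negative) entropy `Σ p log p` (with the convention `0 log 0 = 0`). -/
def entD {ι : Type*} (A : Finset ι) (p : ι → ℝ) : ℝ :=
  ∑ i ∈ A, p i * Real.log (p i)

/-- The measure on `ℝ^d` induced by masses `M` on the grid points. -/
def discMeas (d : ℕ) (Ns : ℕ → ℕ) (n : ℕ) (M : (Fin d → ℤ) → ℝ) :
    Measure (Fin d → ℝ) :=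
  ∑ i ∈ gridIdx d Ns n, ENNReal.ofReal (M i) • Measure.dirac (gpt d Ns n i)

/-- The discretized initial condition `M_{n,0}(x_i) = m₀(E_i^n)`, where `E_i^n` is the
cube of side `Δx_n` centered at `x_i` (a closed ball for the sup norm of `ℝ^d`). -/
def Mzero (d : ℕ) (Ns : ℕ → ℕ) (n : ℕ) (m0 : Measure (Fin d → ℝ)) (i : Fin d → ℤ) : ℝ :=
  (m0 (Metric.closedBall (gpt d Ns n i) (dxn Ns n / 2))).toReal

/-- The one-step entropy-penalized cost
`p ↦ Σ_j p(j) [Δt_n ℓ((x_j − x_i)/Δt_n) + U(j)] + ε_n E_n(p)`. -/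
def stepObj (d : ℕ) (T : ℝ) (Ns Nt : ℕ → ℕ) (n : ℕ) (ℓ : (Fin d → ℝ) → ℝ) (εn : ℝ)
    (U1 : (Fin d → ℤ) → ℝ) (i : Fin d → ℤ) (p : (Fin d → ℤ) → ℝ) : ℝ :=
  (∑ j ∈ gridIdx d Ns n, p j *
      (dtn T Nt n * ℓ ((dtn T Nt n)⁻¹ • (gpt d Ns n j - gpt d Ns n i)) + U1 j)) +
    εn * entD (gridIdx d Ns n) p

/-- `(U, M, P)` solves the entropy-regularized finite MFG system on the `n`-th grid:
`P(k, i, ·)` is the unique minimizer of the one-step cost, `U` satisfies the dynamic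
programming equation, `M` is the induced marginal flow starting from the discretized
initial condition, and `U(N^t_n, ·)` is the terminal cost. -/
def SolvesDiscreteMFG (d : ℕ) (T : ℝ) (Ns Nt : ℕ → ℕ) (eps : ℕ → ℝ)
    (ℓ : (Fin d → ℝ) → ℝ) (f g : (Fin d → ℝ) → Measure (Fin d → ℝ) → ℝ)
    (m0 : Measure (Fin d → ℝ)) (n : ℕ)
    (U M : ℕ → (Fin d → ℤ) → ℝ) (P : ℕ → (Fin d → ℤ) → (Fin d → ℤ) → ℝ) : Prop :=
  (∀ k < Nt n, ∀ i ∈ gridIdx d Ns n,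
    P k i ∈ gsimplex (gridIdx d Ns n) ∧
    (∀ p ∈ gsimplex (gridIdx d Ns n),
      stepObj d T Ns Nt n ℓ (eps n) (U (k + 1)) i (P k i) ≤
        stepObj d T Ns Nt n ℓ (eps n) (U (k + 1)) i p) ∧
    (∀ p ∈ gsimplex (gridIdx d Ns n),
      (∀ p' ∈ gsimplex (gridIdx d Ns n),
        stepObj d T Ns Nt n ℓ (eps n) (U (k + 1)) i p ≤
          stepObj d T Ns Nt n ℓ (eps n) (U (k + 1)) i p') → p = P k i) ∧
    U k i = stepObj d T Ns Nt n ℓ (eps n) (U (k + 1)) i (P k i) +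
      dtn T Nt n * f (gpt d Ns n i) (discMeas d Ns n (M k))) ∧
  (∀ k < Nt n, ∀ j ∈ gridIdx d Ns n,
    M (k + 1) j = ∑ i ∈ gridIdx d Ns n, P k i j * M k i) ∧
  (∀ i ∈ gridIdx d Ns n, M 0 i = Mzero d Ns n m0 i) ∧
  (∀ i ∈ gridIdx d Ns n, U (Nt n) i = g (gpt d Ns n i) (discMeas d Ns n (M (Nt n)))) ∧
  (∀ k ≤ Nt n, M k ∈ gsimplex (gridIdx d Ns n))

/-- The weight of the discrete trajectory `s` under the kernel `P` with discretized
initial distribution: `M_{n,0}(s_0) Π_k P(s_k, s_{k+1}, t_k)`. -/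
def pathWeight (d : ℕ) (Ns Nt : ℕ → ℕ) (n : ℕ) (m0 : Measure (Fin d → ℝ))
    (P : ℕ → (Fin d → ℤ) → (Fin d → ℤ) → ℝ)
    (s : Fin (Nt n + 1) → Fin d → ℤ) : ℝ :=
  Mzero d Ns n m0 (s 0) * ∏ k : Fin (Nt n), P (k : ℕ) (s k.castSucc) (s k.succ)

/-- The probability measure `ξ_n` on `Γ` induced by the discrete MFG solution: the sum
over discrete trajectories of their weights times the Dirac mass at the corresponding
piecewise affine path `interp s`. -/
def xiMeas (d : ℕ) (T : ℝ) [MeasurableSpace (PathSpace T d)] (Ns Nt : ℕ → ℕ)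
    (m0 : Measure (Fin d → ℝ)) (n : ℕ)
    (P : ℕ → (Fin d → ℤ) → (Fin d → ℤ) → ℝ)
    (interp : (Fin (Nt n + 1) → Fin d → ℤ) → PathSpace T d) : Measure (PathSpace T d) :=
  ∑ s ∈ Fintype.piFinset (fun _ : Fin (Nt n + 1) => gridIdx d Ns n),
    ENNReal.ofReal (pathWeight d Ns Nt n m0 P s) • Measure.dirac (interp s)

lemma sum_piFinset_succ {α : Type*} [DecidableEq α] (A : Finset α) (N : ℕ)
    {M : Type*} [AddCommMonoid M] (f : (Fin (N+1) → α) → M) :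
    ∑ s ∈ Fintype.piFinset (fun _ : Fin (N+1) => A), f s
      = ∑ i ∈ A, ∑ s ∈ Fintype.piFinset (fun _ : Fin N => A), f (Fin.cons i s) := by
  rw [← Finset.sum_product']
  refine Finset.sum_nbij' (fun s => (s 0, Fin.tail s)) (fun p => Fin.cons p.1 p.2) ?_ ?_ ?_ ?_ ?_
  · intro s hs
    simp only [Fintype.mem_piFinset] at hs
    simp only [Finset.mem_product, Fintype.mem_piFinset]
    exact ⟨hs 0, fun i => hs _⟩
  · intro p hp
    simp only [Finset.mem_product, Fintype.mem_piFinset] at hp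
    simp only [Fintype.mem_piFinset]
    intro i
    refine Fin.cases ?_ ?_ i
    · simpa using hp.1
    · intro j; simpa using hp.2 j
  · intro s hs; exact Fin.cons_self_tail s
  · intro p hp; simp
  · intro s hs; rw [Fin.cons_self_tail]

lemma chain_sum {α : Type*} [DecidableEq α] (A : Finset α) :
    ∀ (N : ℕ) (μ : α → ℝ) (Q : ℕ → α → α → ℝ) (Mes : ℕ → α → ℝ),
    (∀ i ∈ A, Mes 0 i = μ i) →
    (∀ k < N, ∀ j ∈ A, Mes (k+1) j = ∑ i ∈ A, Q k i j * Mes k i) →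
    ∀ G : α → ℝ,
    ∑ s ∈ Fintype.piFinset (fun _ : Fin (N+1) => A),
      (μ (s 0) * ∏ k : Fin N, Q (k : ℕ) (s k.castSucc) (s k.succ)) * G (s (Fin.last N))
      = ∑ j ∈ A, Mes N j * G j := by
  intro N
  induction N with
  | zero =>
    intro μ Q Mes hM0 _ G
    rw [sum_piFinset_succ]
    refine Finset.sum_congr rfl fun i hi => ?_
    have hcard : (Fintype.piFinset (fun _ : Fin 0 => A)).card = 1 := by
      rw [Fintype.card_piFinset]; simp
    obtain ⟨s0, hs0⟩ := Finset.card_eq_one.mp hcard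
    rw [hs0, Finset.sum_singleton]
    simp [hM0 i hi]
  | succ N IH =>
    intro μ Q Mes hM0 hrec G
    rw [sum_piFinset_succ]
    have key : ∀ s ∈ Fintype.piFinset (fun _ : Fin (N+1) => A),
        ∑ i ∈ A, (μ ((Fin.cons i s : Fin (N+2) → α) 0) *
            ∏ k : Fin (N+1), Q (k : ℕ) ((Fin.cons i s : Fin (N+2) → α) k.castSucc)
              ((Fin.cons i s : Fin (N+2) → α) k.succ)) *
            G ((Fin.cons i s : Fin (N+2) → α) (Fin.last (N+1)))
        = (Mes 1 (s 0) * ∏ k : Fin N, Q ((k : ℕ)+1) (s k.castSucc) (s k.succ))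
            * G (s (Fin.last N)) := by
      intro s hs
      simp only [Fintype.mem_piFinset] at hs
      have hlast : ∀ i : α, (Fin.cons i s : Fin (N+2) → α) (Fin.last (N+1)) = s (Fin.last N) := by
        intro i
        rw [← Fin.succ_last, Fin.cons_succ]
      have hprod : ∀ i : α, (∏ k : Fin (N+1), Q (k : ℕ) ((Fin.cons i s : Fin (N+2) → α) k.castSucc)
          ((Fin.cons i s : Fin (N+2) → α) k.succ))
          = Q 0 i (s 0) * ∏ k : Fin N, Q ((k : ℕ)+1) (s k.castSucc) (s k.succ) := by
        intro i
        rw [Fin.prod_univ_succ]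
        simp only [Fin.val_zero, Fin.castSucc_zero, Fin.cons_zero, Fin.succ_zero_eq_one]
        have e1 : (Fin.cons i s : Fin (N+2) → α) 1 = s 0 := by
          rw [show (1 : Fin (N+2)) = Fin.succ 0 from rfl, Fin.cons_succ]
        rw [e1]
        refine congrArg _ (Finset.prod_congr rfl fun k _ => ?_)
        rw [← Fin.succ_castSucc, Fin.cons_succ, Fin.cons_succ]
        simp
      have hsum : ∑ i ∈ A, Q 0 i (s 0) * μ i = Mes 1 (s 0) := by
        rw [hrec 0 (Nat.succ_pos N) (s 0) (hs 0)]
        exact Finset.sum_congr rfl fun i hi => by rw [hM0 i hi]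
      calc ∑ i ∈ A, (μ ((Fin.cons i s : Fin (N+2) → α) 0) *
            ∏ k : Fin (N+1), Q (k : ℕ) ((Fin.cons i s : Fin (N+2) → α) k.castSucc)
              ((Fin.cons i s : Fin (N+2) → α) k.succ)) *
            G ((Fin.cons i s : Fin (N+2) → α) (Fin.last (N+1)))
          = ∑ i ∈ A, (Q 0 i (s 0) * μ i) *
              ((∏ k : Fin N, Q ((k : ℕ)+1) (s k.castSucc) (s k.succ)) * G (s (Fin.last N))) := by
            refine Finset.sum_congr rfl fun i _ => ?_
            rw [hprod i, hlast i, Fin.cons_zero]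
            ring
        _ = (∑ i ∈ A, Q 0 i (s 0) * μ i) *
              ((∏ k : Fin N, Q ((k : ℕ)+1) (s k.castSucc) (s k.succ)) * G (s (Fin.last N))) := by
            rw [Finset.sum_mul]
        _ = (Mes 1 (s 0) * ∏ k : Fin N, Q ((k : ℕ)+1) (s k.castSucc) (s k.succ))
              * G (s (Fin.last N)) := by rw [hsum, mul_assoc]
    rw [Finset.sum_comm, Finset.sum_congr rfl key]
    exact IH (Mes 1) (fun k => Q (k+1)) (fun k => Mes (k+1))
      (fun i _ => rfl)
      (fun k hk j hj => hrec (k+1) (Nat.succ_lt_succ hk) j hj) G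
lemma entD_ge {ι : Type*} (A : Finset ι) (p : ι → ℝ) (hp : p ∈ gsimplex A) :
    -Real.log A.card ≤ entD A p := by
  obtain ⟨hnn, -, hsum⟩ := hp
  have hA : 0 < (A.card : ℝ) := by
    have : A.Nonempty := by
      by_contra h
      rw [Finset.not_nonempty_iff_eq_empty] at h
      simp [h] at hsum
    exact_mod_cast Finset.card_pos.mpr this
  have key : ∀ i ∈ A, p i - 1 / A.card ≤ p i * Real.log (p i) + p i * Real.log A.card := by
    intro i _
    rcases eq_or_lt_of_le (hnn i) with h0 | h0
    · rw [← h0]; simp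
    · have hx : (0:ℝ) < p i * A.card := by positivity
      have hlog := Real.log_le_sub_one_of_pos (x := 1 / (p i * A.card)) (by positivity)
      rw [Real.log_div one_ne_zero (ne_of_gt hx), Real.log_one, zero_sub] at hlog
      have h1 : 1 - 1 / (p i * A.card) ≤ Real.log (p i * A.card) := by linarith
      rw [Real.log_mul (ne_of_gt h0) (ne_of_gt hA)] at h1
      have h2 : p i * (1 - 1 / (p i * A.card)) ≤ p i * (Real.log (p i) + Real.log A.card) :=
        mul_le_mul_of_nonneg_left h1 (hnn i)
      calc p i - 1 / A.card = p i * (1 - 1 / (p i * A.card)) := by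
            field_simp
          _ ≤ p i * (Real.log (p i) + Real.log A.card) := h2
          _ = p i * Real.log (p i) + p i * Real.log A.card := by ring
  have hsum2 : ∑ i ∈ A, (p i - 1 / A.card) ≤
      ∑ i ∈ A, (p i * Real.log (p i) + p i * Real.log A.card) :=
    Finset.sum_le_sum key
  rw [Finset.sum_sub_distrib, Finset.sum_add_distrib, ← Finset.sum_mul, hsum,
    Finset.sum_const, nsmul_eq_mul, one_mul] at hsum2
  have h4 : (A.card : ℝ) * (1 / A.card) = 1 := by field_simp
  rw [h4] at hsum2
  unfold entD
  linarith

lemma coer_bound (q lo Cb : ℝ) (hq : 1 < q) (hlo : 0 < lo) (hCb : 0 ≤ Cb)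
    (u : ℝ) (hu : 0 ≤ u) :
    Cb * u - lo * u ^ q ≤ Cb * (Cb / lo) ^ (1 / (q - 1)) := by
  set u₀ : ℝ := (Cb / lo) ^ (1 / (q - 1)) with hu₀
  have hq1 : 0 < q - 1 := by linarith
  have hu₀nn : 0 ≤ u₀ := Real.rpow_nonneg (by positivity) _
  have hu₀pow : u₀ ^ (q - 1) = Cb / lo := by
    rw [hu₀, ← Real.rpow_mul (by positivity), one_div_mul_cancel (ne_of_gt hq1),
      Real.rpow_one]
  rcases le_or_gt u u₀ with h | h
  · have h1 : 0 ≤ lo * u ^ q := by positivity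
    have h2 : Cb * u ≤ Cb * u₀ := mul_le_mul_of_nonneg_left h hCb
    linarith
  · have hupos : 0 < u := lt_of_le_of_lt hu₀nn h
    have hqq : u ^ (q - 1) * u = u ^ q := by
      nth_rewrite 2 [← Real.rpow_one u]
      rw [← Real.rpow_add hupos, sub_add_cancel]
    have hmono : u₀ ^ (q - 1) ≤ u ^ (q - 1) :=
      Real.rpow_le_rpow hu₀nn h.le hq1.le
    have h3 : Cb * u ≤ lo * u ^ q := by
      rw [← hqq]
      have : Cb ≤ lo * u ^ (q - 1) := by
        rw [hu₀pow] at hmono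
        calc Cb = lo * (Cb / lo) := by field_simp
          _ ≤ lo * u ^ (q - 1) := mul_le_mul_of_nonneg_left hmono hlo.le
      calc Cb * u ≤ (lo * u ^ (q - 1)) * u := mul_le_mul_of_nonneg_right this hupos.le
        _ = lo * (u ^ (q - 1) * u) := by ring
    have : 0 ≤ Cb * u₀ := mul_nonneg hCb hu₀nn
    linarith

lemma W1_comm {d : ℕ} (μ ν : Measure (Fin d → ℝ)) : W1 μ ν = W1 ν μ := by
  have key : ∀ (μ ν : Measure (Fin d → ℝ)),
      {r : ℝ | ∃ γ : Measure ((Fin d → ℝ) × (Fin d → ℝ)), γ.map Prod.fst = μ ∧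
        γ.map Prod.snd = ν ∧ r = ∫ p, dist p.1 p.2 ∂γ} ⊆
      {r : ℝ | ∃ γ : Measure ((Fin d → ℝ) × (Fin d → ℝ)), γ.map Prod.fst = ν ∧
        γ.map Prod.snd = μ ∧ r = ∫ p, dist p.1 p.2 ∂γ} := by
    rintro μ ν r ⟨γ, h1, h2, h3⟩
    refine ⟨γ.map Prod.swap, ?_, ?_, ?_⟩
    · rw [Measure.map_map measurable_fst measurable_swap]
      exact h2
    · rw [Measure.map_map measurable_snd measurable_swap]
      exact h1
    · rw [h3, integral_map measurable_swap.aemeasurable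
        continuous_dist.aestronglyMeasurable]
      simp only [Prod.fst_swap, Prod.snd_swap]
      exact integral_congr_ae (Eventually.of_forall fun p => dist_comm _ _)
  unfold W1
  rw [Set.Subset.antisymm (key μ ν) (key ν μ)]

lemma discMeas_prob {d : ℕ} (Ns : ℕ → ℕ) (n : ℕ) (M : (Fin d → ℤ) → ℝ)
    (hM : M ∈ gsimplex (gridIdx d Ns n)) : IsProbabilityMeasure (discMeas d Ns n M) := by
  constructor
  rw [discMeas]
  simp only [Measure.coe_finset_sum, Finset.sum_apply, Measure.coe_smul, Pi.smul_apply,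
    Measure.dirac_apply_of_mem (Set.mem_univ _), smul_eq_mul, mul_one]
  rw [← ENNReal.ofReal_sum_of_nonneg (fun i _ => hM.1 i), hM.2.2, ENNReal.ofReal_one]

lemma discMeas_isP1 {d : ℕ} (Ns : ℕ → ℕ) (n : ℕ) (M : (Fin d → ℤ) → ℝ)
    (hM : M ∈ gsimplex (gridIdx d Ns n)) : IsP1 (discMeas d Ns n M) := by
  refine ⟨discMeas_prob Ns n M hM, ?_⟩
  rw [discMeas, lintegral_finset_sum_measure]
  have : ∀ i ∈ gridIdx d Ns n, ∫⁻ x, (‖x‖₊ : ℝ≥0∞) ∂(ENNReal.ofReal (M i) •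
      Measure.dirac (gpt d Ns n i)) = ENNReal.ofReal (M i) * ‖gpt d Ns n i‖₊ := by
    intro i _
    rw [lintegral_smul_measure, lintegral_dirac, smul_eq_mul]
  rw [Finset.sum_congr rfl this]
  exact ENNReal.sum_lt_top.mpr fun i _ =>
    ENNReal.mul_lt_top ENNReal.ofReal_lt_top ENNReal.coe_lt_top

lemma dpp_estimate (d : ℕ) (T : ℝ) (hT : 0 < T) (q : ℝ) (hq : 1 < q)
    (ℓ : (Fin d → ℝ) → ℝ)
    (lo hi Cℓ : ℝ) (hlo : 0 < lo) (hCℓ : 0 < Cℓ)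
    (hgrowth : ∀ α : Fin d → ℝ, lo * ‖α‖ ^ q - Cℓ ≤ ℓ α ∧ ℓ α ≤ hi * ‖α‖ ^ q + Cℓ)
    (f g : (Fin d → ℝ) → Measure (Fin d → ℝ) → ℝ)
    (Cb : ℝ) (hCb : 0 < Cb)
    (hbound : ∀ m, IsP1 m → ∀ x, |f x m| ≤ Cb ∧ |g x m| ≤ Cb)
    (hxLip : ∀ m, IsP1 m → ∀ x y,
      |f x m - f y m| ≤ Cb * ‖x - y‖ ∧ |g x m - g y m| ≤ Cb * ‖x - y‖)
    (m0 : Measure (Fin d → ℝ))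
    (Ns Nt : ℕ → ℕ) (eps : ℕ → ℝ) (n : ℕ) (hNt : 0 < Nt n) (heps : 0 < eps n)
    (U M : ℕ → (Fin d → ℤ) → ℝ) (P : ℕ → (Fin d → ℤ) → (Fin d → ℤ) → ℝ)
    (hsol : SolvesDiscreteMFG d T Ns Nt eps ℓ f g m0 n U M P) :
    ∀ j k : ℕ, k + j = Nt n → ∀ i ∈ gridIdx d Ns n,
    |U k i - g (gpt d Ns n i) (discMeas d Ns n (M (Nt n)))| ≤
      (j : ℝ) * ((Cℓ + Cb + Cb * (Cb / lo) ^ (1 / (q - 1))) * dtn T Nt n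
        + eps n * Real.log ((gridIdx d Ns n).card)) := by
  have hNtR : (0:ℝ) < (Nt n : ℝ) := by exact_mod_cast hNt
  have hdt : 0 < dtn T Nt n := div_pos hT hNtR
  set c₂ : ℝ := Cb * (Cb / lo) ^ (1 / (q - 1)) with hc₂
  have hc₂nn : 0 ≤ c₂ := mul_nonneg hCb.le (Real.rpow_nonneg (by positivity) _)
  -- the terminal value function
  set V : (Fin d → ℤ) → ℝ := fun i => g (gpt d Ns n i) (discMeas d Ns n (M (Nt n))) with hV
  have hMNt : IsP1 (discMeas d Ns n (M (Nt n))) :=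
    discMeas_isP1 Ns n _ (hsol.2.2.2.2 (Nt n) le_rfl)
  -- grid card ≥ 1
  have hgrid0 : (0 : Fin d → ℤ) ∈ gridIdx d Ns n := by
    rw [gridIdx, Finset.mem_Icc]
    constructor <;> (intro j; simp [Pi.le_def])
  have hL : 0 ≤ Real.log ((gridIdx d Ns n).card) := by
    apply Real.log_nonneg
    have : 0 < (gridIdx d Ns n).card := Finset.card_pos.mpr ⟨0, hgrid0⟩
    exact_mod_cast this
  -- coercivity bound
  have hcoer : ∀ z : Fin d → ℝ, Cb * ‖z‖ - dtn T Nt n * ℓ ((dtn T Nt n)⁻¹ • z) ≤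
      (Cℓ + c₂) * dtn T Nt n := by
    intro z
    set dt := dtn T Nt n with hdtdef
    have hnorm : ‖dt⁻¹ • z‖ = ‖z‖ / dt := by
      rw [norm_smul, norm_inv, Real.norm_eq_abs, abs_of_pos hdt, div_eq_inv_mul]
    have hg := (hgrowth (dt⁻¹ • z)).1
    rw [hnorm] at hg
    have hc := coer_bound q lo Cb hq hlo hCb.le (‖z‖ / dt) (by positivity)
    have hz : ‖z‖ = dt * (‖z‖ / dt) := by field_simp
    have h1 : dt * (lo * (‖z‖/dt) ^ q - Cℓ) ≤ dt * ℓ (dt⁻¹ • z) :=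
      mul_le_mul_of_nonneg_left hg hdt.le
    have h2 : dt * (Cb * (‖z‖/dt) - lo * (‖z‖/dt) ^ q) ≤ dt * c₂ :=
      mul_le_mul_of_nonneg_left hc hdt.le
    calc Cb * ‖z‖ - dt * ℓ (dt⁻¹ • z)
        ≤ Cb * (dt * (‖z‖/dt)) - dt * (lo * (‖z‖/dt) ^ q - Cℓ) := by
          rw [← hz]; linarith
      _ = dt * (Cb * (‖z‖/dt) - lo * (‖z‖/dt) ^ q) + Cℓ * dt := by ring
      _ ≤ dt * c₂ + Cℓ * dt := by linarith
      _ = (Cℓ + c₂) * dt := by ring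
  -- Lipschitz bound on V
  have hVlip : ∀ i' j' : Fin d → ℤ, V i' - Cb * ‖gpt d Ns n j' - gpt d Ns n i'‖ ≤ V j' := by
    intro i' j'
    have := (hxLip _ hMNt (gpt d Ns n i') (gpt d Ns n j')).2
    have habs := abs_le.mp this
    have : ‖gpt d Ns n i' - gpt d Ns n j'‖ = ‖gpt d Ns n j' - gpt d Ns n i'‖ :=
      norm_sub_rev _ _
    rw [hV]; rw [this] at habs; linarith [habs.1, habs.2]
  intro j
  induction j with
  | zero =>
    intro k hk i hi
    have hkNt : k = Nt n := by omega
    rw [hkNt, hsol.2.2.2.1 i hi]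
    simp
  | succ j IH =>
    intro k hk i hi
    have hklt : k < Nt n := by omega
    have hIH : ∀ i' ∈ gridIdx d Ns n, |U (k+1) i' - V i'| ≤
        (j : ℝ) * ((Cℓ + Cb + c₂) * dtn T Nt n
          + eps n * Real.log ((gridIdx d Ns n).card)) := by
      intro i' hi'
      exact IH (k+1) (by omega) i' hi'
    set A : ℝ := (j : ℝ) * ((Cℓ + Cb + c₂) * dtn T Nt n
      + eps n * Real.log ((gridIdx d Ns n).card)) with hA
    obtain ⟨hPsimp, hPmin, -, hUeq⟩ := hsol.1 k hklt i hi
    have hMk : IsP1 (discMeas d Ns n (M k)) :=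
      discMeas_isP1 Ns n _ (hsol.2.2.2.2 k hklt.le)
    have hfb := (hbound _ hMk (gpt d Ns n i)).1
    have hfabs := abs_le.mp hfb
    -- Upper bound via the Dirac competitor
    have hupper : U k i ≤ V i + A + (Cℓ + Cb + c₂) * dtn T Nt n
        + eps n * Real.log ((gridIdx d Ns n).card) := by
      set pdir : (Fin d → ℤ) → ℝ := fun j' => if j' = i then 1 else 0 with hpdir
      have hpd : pdir ∈ gsimplex (gridIdx d Ns n) := by
        refine ⟨fun j' => by rw [hpdir]; positivity, fun j' hj' => ?_, ?_⟩
        · rw [hpdir]; simp only [ite_eq_right_iff]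
          intro h; exact absurd (h ▸ hi) hj'
        · rw [hpdir]
          simp [Finset.sum_ite_eq' (gridIdx d Ns n) i (fun _ => (1:ℝ)), hi]
      have hstep : stepObj d T Ns Nt n ℓ (eps n) (U (k+1)) i pdir
          = dtn T Nt n * ℓ 0 + U (k+1) i := by
        rw [stepObj]
        have hent : entD (gridIdx d Ns n) pdir = 0 := by
          rw [entD]
          refine Finset.sum_eq_zero fun j' _ => ?_
          rw [hpdir]
          by_cases h : j' = i <;> simp [h]
        rw [hent, mul_zero, add_zero]
        have : ∀ j' ∈ gridIdx d Ns n, pdir j' *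
            (dtn T Nt n * ℓ ((dtn T Nt n)⁻¹ • (gpt d Ns n j' - gpt d Ns n i)) + U (k+1) j')
            = if j' = i then dtn T Nt n *
              ℓ ((dtn T Nt n)⁻¹ • (gpt d Ns n j' - gpt d Ns n i)) + U (k+1) j' else 0 := by
          intro j' _
          rw [hpdir]
          by_cases h : j' = i <;> simp [h]
        rw [Finset.sum_congr rfl this, Finset.sum_ite_eq' (gridIdx d Ns n) i, if_pos hi,
          sub_self, smul_zero]
      have hl0 : ℓ 0 ≤ Cℓ := by
        have := (hgrowth 0).2
        rw [norm_zero, Real.zero_rpow (by linarith : q ≠ 0)] at this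
        linarith
      have hmin := hPmin pdir hpd
      have hUi := hIH i hi
      have hUiabs := abs_le.mp hUi
      rw [hUeq]
      have h1 : stepObj d T Ns Nt n ℓ (eps n) (U (k+1)) i (P k i) ≤
          dtn T Nt n * ℓ 0 + U (k+1) i := by rw [← hstep]; exact hmin
      have h2 : dtn T Nt n * ℓ 0 ≤ Cℓ * dtn T Nt n := by
        rw [mul_comm]; exact mul_le_mul_of_nonneg_right hl0 hdt.le
      have h3 : dtn T Nt n * f (gpt d Ns n i) (discMeas d Ns n (M k)) ≤ Cb * dtn T Nt n := by
        rw [mul_comm]; exact mul_le_mul_of_nonneg_right hfabs.2 hdt.le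
      have h4 : 0 ≤ eps n * Real.log ((gridIdx d Ns n).card) := mul_nonneg heps.le hL
      have h5 : 0 ≤ c₂ * dtn T Nt n := mul_nonneg hc₂nn hdt.le
      nlinarith [hUiabs.2]
    -- Lower bound via the growth and entropy estimates
    have hlower : V i - A - ((Cℓ + Cb + c₂) * dtn T Nt n
        + eps n * Real.log ((gridIdx d Ns n).card)) ≤ U k i := by
      obtain ⟨hPnn, hPz, hPsum⟩ := hPsimp
      have hterm : ∀ j' ∈ gridIdx d Ns n,
          (P k i j') * (V i - A - (Cℓ + c₂) * dtn T Nt n) ≤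
          (P k i j') * (dtn T Nt n *
            ℓ ((dtn T Nt n)⁻¹ • (gpt d Ns n j' - gpt d Ns n i)) + U (k+1) j') := by
        intro j' hj'
        refine mul_le_mul_of_nonneg_left ?_ (hPnn j')
        have hU' := (abs_le.mp (hIH j' hj')).1
        have hVl := hVlip i j'
        have hco := hcoer (gpt d Ns n j' - gpt d Ns n i)
        linarith
      have hsum := Finset.sum_le_sum hterm
      rw [← Finset.sum_mul, hPsum, one_mul] at hsum
      have hent := entD_ge (gridIdx d Ns n) (P k i) ⟨hPnn, hPz, hPsum⟩
      have hent2 : -(eps n * Real.log ((gridIdx d Ns n).card)) ≤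
          eps n * entD (gridIdx d Ns n) (P k i) := by
        have := mul_le_mul_of_nonneg_left hent heps.le
        rw [mul_neg] at this
        linarith
      have h3 : -(Cb * dtn T Nt n) ≤
          dtn T Nt n * f (gpt d Ns n i) (discMeas d Ns n (M k)) := by
        have := mul_le_mul_of_nonneg_left hfabs.1 hdt.le
        rw [mul_neg] at this
        linarith [this]
      rw [hUeq, stepObj]
      linarith
    rw [abs_sub_le_iff]
    push_cast
    constructor <;> [linarith [hupper]; linarith [hlower]]

lemma map_sum_smul_dirac {X Y : Type*} [MeasurableSpace X] [MeasurableSpace Y]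
    {ι : Type*} [DecidableEq ι] (F : Finset ι) (c : ι → ℝ≥0∞) (γ : ι → X) (φ : X → Y)
    (hφ : Measurable φ) :
    (∑ s ∈ F, c s • Measure.dirac (γ s)).map φ
      = ∑ s ∈ F, c s • Measure.dirac (φ (γ s)) := by
  induction F using Finset.induction_on with
  | empty => simp [Measure.map_zero]
  | insert _ _ hnotmem ih =>
    rw [Finset.sum_insert hnotmem, Finset.sum_insert hnotmem, Measure.map_add _ _ hφ,
      Measure.map_smul, Measure.map_dirac' hφ, ih]

lemma terminal_marginal (d : ℕ) (T : ℝ) (hT : 0 < T)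
    [MeasurableSpace (PathSpace T d)] [BorelSpace (PathSpace T d)]
    (Ns Nt : ℕ → ℕ) (n : ℕ) (hNt : 0 < Nt n)
    (m0 : Measure (Fin d → ℝ))
    (M : ℕ → (Fin d → ℤ) → ℝ) (P : ℕ → (Fin d → ℤ) → (Fin d → ℤ) → ℝ)
    (hM0 : ∀ i ∈ gridIdx d Ns n, M 0 i = Mzero d Ns n m0 i)
    (hrec : ∀ k < Nt n, ∀ j ∈ gridIdx d Ns n,
      M (k+1) j = ∑ i ∈ gridIdx d Ns n, P k i j * M k i)
    (hPnn : ∀ k < Nt n, ∀ i ∈ gridIdx d Ns n, ∀ j, 0 ≤ P k i j)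
    (interp : (Fin (Nt n + 1) → Fin d → ℤ) → PathSpace T d)
    (hinterp : ∀ s : Fin (Nt n + 1) → Fin d → ℤ, ∀ k : Fin (Nt n), ∀ t : ℝ,
      t ∈ Set.Icc (((k : ℕ) : ℝ) * dtn T Nt n) ((((k : ℕ) : ℝ) + 1) * dtn T Nt n) →
      ev hT.le (interp s) t = gpt d Ns n (s k.castSucc) +
        ((t - ((k : ℕ) : ℝ) * dtn T Nt n) / dtn T Nt n) •
          (gpt d Ns n (s k.succ) - gpt d Ns n (s k.castSucc))) :
    (xiMeas d T Ns Nt m0 n P interp).map (fun γ => ev hT.le γ T)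
      = discMeas d Ns n (M (Nt n)) := by
  have hφ : Measurable (fun γ : PathSpace T d => ev hT.le γ T) := by
    have h : Continuous (fun γ : PathSpace T d => γ (Set.projIcc 0 T hT.le T)) :=
      continuous_eval_const _
    exact h.measurable
  have hNtR : (0:ℝ) < (Nt n : ℝ) := by exact_mod_cast hNt
  have hdt : 0 < dtn T Nt n := div_pos hT hNtR
  have hend : ∀ s : Fin (Nt n + 1) → Fin d → ℤ,
      ev hT.le (interp s) T = gpt d Ns n (s (Fin.last (Nt n))) := by
    intro s
    set k : Fin (Nt n) := ⟨Nt n - 1, Nat.sub_lt hNt one_pos⟩ with hk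
    have hkval : ((k : ℕ) : ℝ) = (Nt n : ℝ) - 1 := by
      have : (k : ℕ) = Nt n - 1 := rfl
      rw [this, Nat.cast_sub hNt, Nat.cast_one]
    have hTval : ((((k:ℕ)):ℝ) + 1) * dtn T Nt n = T := by
      rw [hkval, dtn]; field_simp; ring
    have hmem : T ∈ Set.Icc (((k:ℕ):ℝ) * dtn T Nt n) ((((k:ℕ):ℝ)+1) * dtn T Nt n) := by
      constructor
      · nlinarith [hTval]
      · rw [hTval]
    rw [hinterp s k T hmem]
    have hcoef : (T - ((k:ℕ):ℝ) * dtn T Nt n) / dtn T Nt n = 1 := by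
      rw [div_eq_one_iff_eq (ne_of_gt hdt)]
      nlinarith [hTval]
    have hksucc : k.succ = Fin.last (Nt n) := by
      ext
      simp only [Fin.val_succ, Fin.val_last, hk]
      omega
    rw [hcoef, one_smul, hksucc, add_sub_cancel]
  rw [xiMeas, map_sum_smul_dirac _ _ _ _ hφ]
  have step1 : ∀ s ∈ Fintype.piFinset (fun _ : Fin (Nt n + 1) => gridIdx d Ns n),
      ENNReal.ofReal (pathWeight d Ns Nt n m0 P s) • Measure.dirac (ev hT.le (interp s) T)
      = ENNReal.ofReal (pathWeight d Ns Nt n m0 P s) •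
          Measure.dirac (gpt d Ns n (s (Fin.last (Nt n)))) := fun s _ => by rw [hend]
  rw [Finset.sum_congr rfl step1]
  have hmapsto : ∀ s ∈ Fintype.piFinset (fun _ : Fin (Nt n + 1) => gridIdx d Ns n),
      s (Fin.last (Nt n)) ∈ gridIdx d Ns n := by
    intro s hs
    exact (Fintype.mem_piFinset.mp hs) _
  rw [← Finset.sum_fiberwise_of_maps_to hmapsto
    (fun s => ENNReal.ofReal (pathWeight d Ns Nt n m0 P s) •
      Measure.dirac (gpt d Ns n (s (Fin.last (Nt n)))))]
  rw [discMeas]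
  refine Finset.sum_congr rfl fun j hj => ?_
  have hwnn : ∀ s ∈ Fintype.piFinset (fun _ : Fin (Nt n + 1) => gridIdx d Ns n),
      0 ≤ pathWeight d Ns Nt n m0 P s := by
    intro s hs
    have hs' := Fintype.mem_piFinset.mp hs
    refine mul_nonneg ENNReal.toReal_nonneg (Finset.prod_nonneg fun k _ => ?_)
    exact hPnn k k.isLt (s k.castSucc) (hs' _) _
  have hfiber : ∀ s ∈ (Fintype.piFinset (fun _ : Fin (Nt n + 1) => gridIdx d Ns n)).filter
      (fun s => s (Fin.last (Nt n)) = j),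
      ENNReal.ofReal (pathWeight d Ns Nt n m0 P s) •
        Measure.dirac (gpt d Ns n (s (Fin.last (Nt n))))
      = ENNReal.ofReal (pathWeight d Ns Nt n m0 P s) • Measure.dirac (gpt d Ns n j) := by
    intro s hs
    rw [(Finset.mem_filter.mp hs).2]
  rw [Finset.sum_congr rfl hfiber, ← Finset.sum_smul]
  congr 1
  rw [← ENNReal.ofReal_sum_of_nonneg
    (fun s hs => hwnn s (Finset.mem_filter.mp hs).1)]
  congr 1
  rw [Finset.sum_filter]
  have hchain := chain_sum (gridIdx d Ns n) (Nt n) (Mzero d Ns n m0) P M hM0 hrec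
    (fun j' => if j' = j then 1 else 0)
  have lhs_eq : ∑ s ∈ Fintype.piFinset (fun _ : Fin (Nt n + 1) => gridIdx d Ns n),
      (if s (Fin.last (Nt n)) = j then pathWeight d Ns Nt n m0 P s else 0)
      = ∑ s ∈ Fintype.piFinset (fun _ : Fin (Nt n + 1) => gridIdx d Ns n),
      (Mzero d Ns n m0 (s 0) * ∏ k : Fin (Nt n), P (k : ℕ) (s k.castSucc) (s k.succ)) *
        (if s (Fin.last (Nt n)) = j then 1 else 0) := by
    refine Finset.sum_congr rfl fun s _ => ?_
    rw [pathWeight]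
    by_cases h : s (Fin.last (Nt n)) = j <;> simp [h]
  rw [lhs_eq, hchain]
  simp only [mul_ite, mul_one, mul_zero]
  rw [Finset.sum_ite_eq' (gridIdx d Ns n) j (fun j' => M (Nt n) j'), if_pos hj]
/-- Lemma 4.5(ii): under (H3) and `ε_n = o(1/(N^t_n log N^s_n))`, if the extended
marginal flows `M_n` converge to `m` in `C([0,T]; P₁(ℝ^d))`, then the value functions
converge at the terminal time, i.e. `U^*(x,T) = U_*(x,T) = g(x, m(T))`. -/
theorem discrete_value_terminal_convergence
    (d : ℕ) (T : ℝ) (hT : 0 < T) (q : ℝ) (hq : 1 < q)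
    [MeasurableSpace (PathSpace T d)] [BorelSpace (PathSpace T d)]
    -- (H3)(i)
    (ℓ : (Fin d → ℝ) → ℝ) (hlcont : Continuous ℓ)
    (lo hi Cℓ : ℝ) (hlo : 0 < lo) (hhi : 0 < hi) (hCℓ : 0 < Cℓ)
    (hgrowth : ∀ α : Fin d → ℝ, lo * ‖α‖ ^ q - Cℓ ≤ ℓ α ∧ ℓ α ≤ hi * ‖α‖ ^ q + Cℓ)
    -- (H3)(ii)
    (f g : (Fin d → ℝ) → Measure (Fin d → ℝ) → ℝ)
    (Cb : ℝ) (hCb : 0 < Cb)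
    (hbound : ∀ m, IsP1 m → ∀ x, |f x m| ≤ Cb ∧ |g x m| ≤ Cb)
    (hxLip : ∀ m, IsP1 m → ∀ x y,
      |f x m - f y m| ≤ Cb * ‖x - y‖ ∧ |g x m - g y m| ≤ Cb * ‖x - y‖)
    (hcont : ∀ x m, IsP1 m → ∀ ε > (0 : ℝ), ∃ δ > (0 : ℝ), ∀ y m', IsP1 m' →
      ‖y - x‖ < δ → W1 m m' < δ → |f y m' - f x m| < ε ∧ |g y m' - g x m| < ε)
    -- (H3)(iii)
    (m0 : Measure (Fin d → ℝ)) (hm0 : IsProbabilityMeasure m0)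
    (hm0supp : ∃ R : ℝ, m0 (Metric.closedBall 0 R)ᶜ = 0)
    -- the grids
    (Ns Nt : ℕ → ℕ) (hNs : ∀ n, 0 < Ns n) (hNt : ∀ n, 0 < Nt n)
    (hNsInfty : Tendsto (fun n => (Ns n : ℝ)) atTop atTop)
    (hNtInfty : Tendsto (fun n => (Nt n : ℝ)) atTop atTop)
    (eps : ℕ → ℝ) (heps : ∀ n, 0 < eps n)
    -- ε_n = o(1/(N^t_n log N^s_n))
    (hepsO : Tendsto (fun n => eps n * ((Nt n : ℝ) * Real.log (Ns n))) atTop (𝓝 0))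
    -- the solutions of the finite MFGs and the induced path measures
    (U M : ℕ → ℕ → (Fin d → ℤ) → ℝ)
    (P : ℕ → ℕ → (Fin d → ℤ) → (Fin d → ℤ) → ℝ)
    (hsol : ∀ n, SolvesDiscreteMFG d T Ns Nt eps ℓ f g m0 n (U n) (M n) (P n))
    (interp : (n : ℕ) → (Fin (Nt n + 1) → Fin d → ℤ) → PathSpace T d)
    (hinterp : ∀ n, ∀ s : Fin (Nt n + 1) → Fin d → ℤ, ∀ k : Fin (Nt n), ∀ t : ℝ,
      t ∈ Set.Icc (((k : ℕ) : ℝ) * dtn T Nt n) ((((k : ℕ) : ℝ) + 1) * dtn T Nt n) →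
      ev hT.le (interp n s) t = gpt d Ns n (s k.castSucc) +
        ((t - ((k : ℕ) : ℝ) * dtn T Nt n) / dtn T Nt n) •
          (gpt d Ns n (s k.succ) - gpt d Ns n (s k.castSucc)))
    -- the limit flow `m` and the convergence `M_n → m` in `C([0,T]; P₁(ℝ^d))`,
    -- where each `M_n` is extended to `[0,T]` as the marginal flow of `ξ_n`
    (m : ℝ → Measure (Fin d → ℝ)) (hm : ∀ t ∈ Set.Icc (0 : ℝ) T, IsP1 (m t))
    (hMconv : ∀ ε > (0 : ℝ), ∃ N₀ : ℕ, ∀ n ≥ N₀, ∀ t ∈ Set.Icc (0 : ℝ) T,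
      W1 ((xiMeas d T Ns Nt m0 n (P n) (interp n)).map (fun γ => ev hT.le γ t)) (m t) ≤ ε) :
    ∀ x : Fin d → ℝ, ∀ iseq : ℕ → Fin d → ℤ, ∀ κ : ℕ → ℕ,
      (∀ n, iseq n ∈ gridIdx d Ns n) → (∀ n, κ n ≤ Nt n) →
      Tendsto (fun n => gpt d Ns n (iseq n)) atTop (𝓝 x) →
      Tendsto (fun n => (κ n : ℝ) * dtn T Nt n) atTop (𝓝 T) →
      Tendsto (fun n => U n (κ n) (iseq n)) atTop (𝓝 (g x (m T))) := by
  intro x iseq κ hiseq hκ hxconv htconv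
  set C₁ : ℝ := Cℓ + Cb + Cb * (Cb / lo) ^ (1 / (q - 1)) with hC₁
  set V : ℕ → ℝ := fun n => g (gpt d Ns n (iseq n)) (discMeas d Ns n (M n (Nt n))) with hVdef
  set L : ℕ → ℝ := fun n => Real.log ((gridIdx d Ns n).card) with hLdef
  have hdtpos : ∀ n, 0 < dtn T Nt n := fun n =>
    div_pos hT (by exact_mod_cast hNt n)
  have hLnn : ∀ n, 0 ≤ L n := by
    intro n
    apply Real.log_nonneg
    have h0 : (0 : Fin d → ℤ) ∈ gridIdx d Ns n := by
      rw [gridIdx, Finset.mem_Icc]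
      constructor <;> (intro j; simp [Pi.le_def])
    have : 0 < (gridIdx d Ns n).card := Finset.card_pos.mpr ⟨0, h0⟩
    exact_mod_cast this
  -- the DPP estimate
  have hbnd : ∀ n, |U n (κ n) (iseq n) - V n| ≤
      C₁ * (T - (κ n : ℝ) * dtn T Nt n) + (Nt n : ℝ) * (eps n * L n) := by
    intro n
    have h := dpp_estimate d T hT q hq ℓ lo hi Cℓ hlo hCℓ hgrowth f g Cb hCb hbound hxLip
      m0 Ns Nt eps n (hNt n) (heps n) (U n) (M n) (P n) (hsol n)
      (Nt n - κ n) (κ n) (by have := hκ n; omega) (iseq n) (hiseq n)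
    refine h.trans ?_
    have hc : ((Nt n - κ n : ℕ) : ℝ) = (Nt n : ℝ) - κ n := by
      rw [Nat.cast_sub (hκ n)]
    have hNtne : (Nt n : ℝ) ≠ 0 := ne_of_gt (by exact_mod_cast hNt n)
    have hTeq : (Nt n : ℝ) * dtn T Nt n = T := by
      rw [dtn, mul_comm, div_mul_cancel₀ T hNtne]
    rw [hc]
    have hexp : ((Nt n : ℝ) - κ n) * (C₁ * dtn T Nt n + eps n * L n)
        = C₁ * (T - κ n * dtn T Nt n) + ((Nt n : ℝ) - κ n) * (eps n * L n) := by
      have h9 : ((Nt n : ℝ) - κ n) * (C₁ * dtn T Nt n + eps n * L n)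
          = C₁ * ((Nt n : ℝ) * dtn T Nt n - κ n * dtn T Nt n)
            + ((Nt n : ℝ) - κ n) * (eps n * L n) := by ring
      rw [h9, hTeq]
    rw [hexp]
    have h2 : ((Nt n : ℝ) - κ n) * (eps n * L n) ≤ (Nt n : ℝ) * (eps n * L n) := by
      have hp : 0 ≤ eps n * L n := mul_nonneg (heps n).le (hLnn n)
      have : (0:ℝ) ≤ (κ n : ℝ) := Nat.cast_nonneg _
      nlinarith
    linarith
  -- first error term tends to 0
  have hB1 : Tendsto (fun n => C₁ * (T - (κ n : ℝ) * dtn T Nt n)) atTop (𝓝 0) := by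
    have := (tendsto_const_nhds (x := T) (f := atTop)).sub htconv
    rw [sub_self] at this
    simpa using this.const_mul C₁
  -- second error term tends to 0
  have hB2 : Tendsto (fun n => (Nt n : ℝ) * (eps n * L n)) atTop (𝓝 0) := by
    have hcard : ∀ n, (gridIdx d Ns n).card = (2 * (Ns n)^2 + 1)^d := by
      intro n
      rw [gridIdx, Pi.card_Icc]
      simp only [Int.card_Icc]
      rw [Finset.prod_const, Finset.card_univ, Fintype.card_fin]
      congr 1
      have : ((Ns n : ℤ))^2 = ((Ns n ^ 2 : ℕ) : ℤ) := by push_cast; ring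
      rw [this]
      omega
    have hub : ∀ᶠ n in atTop, (Nt n : ℝ) * (eps n * L n) ≤
        ((d : ℝ) * (Real.log 3 + 2)) * (eps n * ((Nt n : ℝ) * Real.log (Ns n))) := by
      have hev : ∀ᶠ n in atTop, (3:ℝ) ≤ (Ns n : ℝ) := hNsInfty.eventually_ge_atTop 3
      filter_upwards [hev] with n hNs3
      have hNspos : (0:ℝ) < (Ns n : ℝ) := by linarith
      have hlog1 : 1 ≤ Real.log (Ns n) := by
        rw [Real.le_log_iff_exp_le hNspos]
        calc Real.exp 1 ≤ 2.7182818286 := (Real.exp_one_lt_d9).le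
          _ ≤ 3 := by norm_num
          _ ≤ (Ns n : ℝ) := hNs3
      have hL1 : L n = (d : ℝ) * Real.log (2 * (Ns n : ℝ)^2 + 1) := by
        rw [hLdef]
        simp only
        rw [hcard n]
        push_cast
        rw [Real.log_pow]
      have hlog2 : Real.log (2 * (Ns n : ℝ)^2 + 1) ≤ Real.log 3 + 2 * Real.log (Ns n) := by
        have h1 : 2 * (Ns n : ℝ)^2 + 1 ≤ 3 * (Ns n : ℝ)^2 := by nlinarith
        have h2 : Real.log (2 * (Ns n : ℝ)^2 + 1) ≤ Real.log (3 * (Ns n : ℝ)^2) :=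
          Real.log_le_log (by positivity) h1
        have h3 : Real.log (3 * (Ns n : ℝ)^2) = Real.log 3 + 2 * Real.log (Ns n) := by
          rw [Real.log_mul (by norm_num) (by positivity), Real.log_pow]
          push_cast; ring
        linarith
      have hNtnn : (0:ℝ) ≤ (Nt n : ℝ) := Nat.cast_nonneg _
      have hepsnn : (0:ℝ) ≤ eps n := (heps n).le
      have hlog3 : (0:ℝ) ≤ Real.log 3 := Real.log_nonneg (by norm_num)
      have hchain : L n ≤ (d:ℝ) * (Real.log 3 + 2) * Real.log (Ns n) := by
        rw [hL1]
        have h5 : Real.log 3 + 2 * Real.log (Ns n) ≤ (Real.log 3 + 2) * Real.log (Ns n) := by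
          nlinarith
        have h6 : Real.log (2 * (Ns n : ℝ)^2 + 1) ≤ (Real.log 3 + 2) * Real.log (Ns n) :=
          le_trans hlog2 h5
        have h7 : (0:ℝ) ≤ (d:ℝ) := Nat.cast_nonneg d
        nlinarith
      calc (Nt n : ℝ) * (eps n * L n)
          ≤ (Nt n : ℝ) * (eps n * ((d:ℝ) * (Real.log 3 + 2) * Real.log (Ns n))) := by
            have : 0 ≤ (Nt n : ℝ) * eps n := mul_nonneg hNtnn hepsnn
            nlinarith [hchain]
        _ = ((d : ℝ) * (Real.log 3 + 2)) * (eps n * ((Nt n : ℝ) * Real.log (Ns n))) := by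
            ring
    have hlb : ∀ᶠ n in atTop, 0 ≤ (Nt n : ℝ) * (eps n * L n) :=
      Eventually.of_forall fun n =>
        mul_nonneg (Nat.cast_nonneg _) (mul_nonneg (heps n).le (hLnn n))
    have hrhs : Tendsto (fun n => ((d : ℝ) * (Real.log 3 + 2)) *
        (eps n * ((Nt n : ℝ) * Real.log (Ns n)))) atTop (𝓝 0) := by
      simpa using hepsO.const_mul ((d : ℝ) * (Real.log 3 + 2))
    exact squeeze_zero' hlb hub hrhs
  have hE1 : Tendsto (fun n => C₁ * (T - (κ n : ℝ) * dtn T Nt n)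
      + (Nt n : ℝ) * (eps n * L n)) atTop (𝓝 0) := by
    simpa using hB1.add hB2
  -- convergence of the terminal values
  have hVconv : Tendsto V atTop (𝓝 (g x (m T))) := by
    rw [Metric.tendsto_atTop]
    intro ε hε
    obtain ⟨δ, hδpos, hδ⟩ := hcont x (m T) (hm T ⟨hT.le, le_refl T⟩) ε hε
    obtain ⟨N₁, hN₁⟩ := hMconv (δ/2) (by linarith)
    obtain ⟨N₂, hN₂⟩ := Metric.tendsto_atTop.mp hxconv δ hδpos
    refine ⟨max N₁ N₂, fun n hn => ?_⟩
    have hn₁ : n ≥ N₁ := le_trans (le_max_left _ _) hn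
    have hn₂ : n ≥ N₂ := le_trans (le_max_right _ _) hn
    have hPnn : ∀ k < Nt n, ∀ i ∈ gridIdx d Ns n, ∀ j, 0 ≤ P n k i j := by
      intro k hk i hi j
      exact ((hsol n).1 k hk i hi).1.1 j
    have hmap := terminal_marginal d T hT Ns Nt n (hNt n) m0 (M n) (P n)
      (hsol n).2.2.1 (hsol n).2.1 hPnn (interp n) (hinterp n)
    have hisp1 : IsP1 (discMeas d Ns n (M n (Nt n))) :=
      discMeas_isP1 Ns n _ ((hsol n).2.2.2.2 (Nt n) le_rfl)
    have hw : W1 (m T) (discMeas d Ns n (M n (Nt n))) < δ := by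
      rw [W1_comm, ← hmap]
      have := hN₁ n hn₁ T ⟨hT.le, le_refl T⟩
      linarith
    have hx' : ‖gpt d Ns n (iseq n) - x‖ < δ := by
      rw [← dist_eq_norm]
      exact hN₂ n hn₂
    have := (hδ (gpt d Ns n (iseq n)) (discMeas d Ns n (M n (Nt n))) hisp1 hx' hw).2
    rw [Real.dist_eq]
    exact this
  -- conclusion
  have hdistV : Tendsto (fun n => dist (V n) (g x (m T))) atTop (𝓝 0) :=
    tendsto_iff_dist_tendsto_zero.mp hVconv
  rw [tendsto_iff_dist_tendsto_zero]
  have htri : ∀ n, dist (U n (κ n) (iseq n)) (g x (m T)) ≤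
      (C₁ * (T - (κ n : ℝ) * dtn T Nt n) + (Nt n : ℝ) * (eps n * L n))
        + dist (V n) (g x (m T)) := by
    intro n
    calc dist (U n (κ n) (iseq n)) (g x (m T))
        ≤ dist (U n (κ n) (iseq n)) (V n) + dist (V n) (g x (m T)) := dist_triangle _ _ _
      _ ≤ (C₁ * (T - (κ n : ℝ) * dtn T Nt n) + (Nt n : ℝ) * (eps n * L n))
          + dist (V n) (g x (m T)) := by
          have := hbnd n
          rw [Real.dist_eq]
          linarith [this]
  have hsq := squeeze_zero (fun n => dist_nonneg) htri (by simpa using hE1.add hdistV)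
  exact hsq
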